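/- Let A be a complex unital Banach algebra, a, b ∈ A with b − a such that ρ(λ(b−a) + q) ≤ ‖q‖ for all λ ∈ ℂ and all quasinilpotent q. Then ρ((b−a) + q) = 0 for every quasinilpotent q; consequently, if A is semisimple, a = b. -/

import Mathlib

open scoped ENNReal NNReal
open Filter Topology Metric Set NormedSpace

set_option linter.unusedSectionVars false
set_option linter.unnecessarySimpa false
set_option maxHeartbeats 1600000

namespace QNPerturb

section Basics
set_option linter.unusedSectionVars false
variable {A : Type*} [NormedRing A] [NormedAlgebra ℂ A] [CompleteSpace A]

noncomputable def srad (y : A) : ℝ := (spectralRadius ℂ y).toReal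

lemma spectralRadius_le_basic (y : A) :
    spectralRadius ℂ y ≤ (‖y‖₊ : ℝ≥0∞) * ‖(1 : A)‖₊ := by
  have h := spectrum.spectralRadius_le_pow_nnnorm_pow_one_div ℂ y 0
  simpa using h

lemma spectralRadius_ne_top (y : A) : spectralRadius ℂ y ≠ ⊤ :=
  ((spectralRadius_le_basic y).trans_lt
    (by simp [lt_top_iff_ne_top, ENNReal.mul_ne_top])).ne

lemma srad_nonneg (y : A) : 0 ≤ srad y := ENNReal.toReal_nonneg

lemma srad_eq_zero {y : A} (h : srad y ≤ 0) : spectralRadius ℂ y = 0 := by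
  have := (ENNReal.toReal_eq_zero_iff (spectralRadius ℂ y)).mp (le_antisymm h (srad_nonneg y))
  exact this.resolve_right (spectralRadius_ne_top y)

lemma srad_of_eq_zero {y : A} (h : spectralRadius ℂ y = 0) : srad y = 0 := by
  simp [srad, h]

lemma srad_pow_le (y : A) {n : ℕ} (hn : n ≠ 0) : srad y ^ n ≤ ‖y ^ n‖ * ‖(1 : A)‖ := by
  obtain ⟨m, rfl⟩ := Nat.exists_eq_succ_of_ne_zero hn
  have h := spectrum.spectralRadius_le_pow_nnnorm_pow_one_div ℂ y m
  have hmn : (1/(m+1) : ℝ) * ((m+1 : ℕ) : ℝ) = 1 := by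
    push_cast; rw [one_div, inv_mul_cancel₀ (by positivity)]
  have h2 : spectralRadius ℂ y ^ ((m+1 : ℕ) : ℝ) ≤ ((‖y ^ (m+1)‖₊ * ‖(1:A)‖₊ : ℝ≥0) : ℝ≥0∞) := by
    calc spectralRadius ℂ y ^ ((m+1 : ℕ) : ℝ)
        ≤ ((‖y ^ (m+1)‖₊ : ℝ≥0∞) ^ (1/(m+1) : ℝ) * (‖(1:A)‖₊ : ℝ≥0∞) ^ (1/(m+1) : ℝ)) ^ ((m+1:ℕ) : ℝ) := by
          exact ENNReal.rpow_le_rpow h (by positivity)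
      _ = ((‖y ^ (m+1)‖₊ * ‖(1:A)‖₊ : ℝ≥0) : ℝ≥0∞) := by
          rw [ENNReal.mul_rpow_of_nonneg _ _ (by positivity), ← ENNReal.rpow_mul,
            ← ENNReal.rpow_mul, hmn, ENNReal.rpow_one, ENNReal.rpow_one, ENNReal.coe_mul]
  have h3 := ENNReal.toReal_mono (ENNReal.mul_ne_top ENNReal.coe_ne_top ENNReal.coe_ne_top) h2
  rw [← ENNReal.toReal_rpow] at h3
  have h4 : ((spectralRadius ℂ y).toReal) ^ ((m+1:ℕ) : ℝ) ≤ ‖y ^ (m+1)‖ * ‖(1:A)‖ := by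
    simpa using h3
  rw [Real.rpow_natCast] at h4
  simpa [srad] using h4

lemma tendsto_srad (y : A) :
    Tendsto (fun n : ℕ => ‖y ^ n‖ ^ (1 / n : ℝ)) atTop (𝓝 (srad y)) := by
  have h := spectrum.pow_norm_pow_one_div_tendsto_nhds_spectralRadius y
  have h2 := (ENNReal.tendsto_toReal (spectralRadius_ne_top y)).comp h
  show Tendsto _ atTop (𝓝 (spectralRadius ℂ y).toReal)
  convert h2 using 2 with n
  rw [Function.comp_apply, ENNReal.toReal_ofReal (by positivity)]

lemma eventually_pow_lt {y : A} {c : ℝ} (hc : srad y < c) :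
    ∀ᶠ n : ℕ in atTop, ‖y ^ n‖ < c ^ n := by
  have h0 : 0 < c := (srad_nonneg y).trans_lt hc
  have h := (tendsto_srad y).eventually_lt_const hc
  filter_upwards [h, eventually_ge_atTop 1] with n hn hn1
  have hne : (n:ℝ) ≠ 0 := by positivity
  have key : (‖y ^ n‖ ^ (1/n : ℝ)) ^ n = ‖y ^ n‖ := by
    rw [← Real.rpow_natCast (‖y ^ n‖ ^ (1/n : ℝ)) n, ← Real.rpow_mul (norm_nonneg _),
      one_div, inv_mul_cancel₀ hne, Real.rpow_one]
  calc ‖y ^ n‖ = (‖y ^ n‖ ^ (1/n : ℝ)) ^ n := key.symm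
    _ < c ^ n := by
        exact pow_lt_pow_left₀ hn (Real.rpow_nonneg (norm_nonneg _) _) (by omega)

lemma srad_le_of_le {y : A} {c : ℝ≥0} (h : spectralRadius ℂ y ≤ (c : ℝ≥0∞)) : srad y ≤ (c:ℝ) := by
  simpa [srad] using ENNReal.toReal_mono (by simp) h

lemma norm_pow_two_le (y : A) (j : ℕ) {c : ℝ} (hc : 0 ≤ c)
    (h : ‖y ^ (2^j)‖ ≤ c ^ (2^j)) (j' : ℕ) (hj : j ≤ j') : ‖y ^ (2^j')‖ ≤ c ^ (2^j') := by
  induction j' with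
  | zero => simpa [Nat.le_zero.mp hj] using h
  | succ k ih =>
    rcases Nat.lt_or_ge k j with hk | hk
    · have : j = k + 1 := by omega
      subst this; exact h
    · have hik := ih hk
      have h1 : y ^ (2^(k+1)) = (y ^ (2^k)) * (y ^ (2^k)) := by
        rw [← pow_add]; ring_nf
      calc ‖y ^ (2^(k+1))‖ ≤ ‖y ^ (2^k)‖ * ‖y ^ (2^k)‖ := by rw [h1]; exact norm_mul_le _ _
        _ ≤ c ^ (2^k) * c ^ (2^k) := by
            exact mul_le_mul hik hik (norm_nonneg _) (by positivity)
        _ = c ^ (2^(k+1)) := by rw [← pow_add]; ring_nf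

end Basics


section Main
variable {A : Type*} [NormedRing A] [NormedAlgebra ℂ A] [CompleteSpace A]


section VesAux
variable [Nontrivial A]

lemma vesentini_aux (F : ℂ → A) (hF : Differentiable ℂ F) (M : ℝ)
    (hM : ∀ w, srad (F w) ≤ M) (h0 : spectralRadius ℂ (F 0) = 0) :
    spectralRadius ℂ (F 1) = 0 := by
  apply srad_eq_zero
  refine le_of_forall_pos_le_add (fun ε hε => ?_)
  rw [zero_add]
  set M' := max M ε with hM'def
  have hM'ε : ε ≤ M' := le_max_right _ _
  have hM'pos : 0 < M' := lt_of_lt_of_le hε hM'ε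
  have hM'b : ∀ w, srad (F w) ≤ M' := fun w => (hM w).trans (le_max_left _ _)
  have hone : (1:ℝ) ≤ ‖(1:A)‖ := one_le_norm_one A
  have hlog1 : 0 ≤ Real.log ‖(1:A)‖ := Real.log_nonneg hone
  set κ := ε/4 with hκdef
  have hκpos : 0 < κ := by positivity
  -- Step 1 : power of F 0 small
  obtain ⟨n₀, hn₀⟩ := eventually_atTop.mp
    (eventually_pow_lt (y := F 0) (by rw [srad_of_eq_zero h0]; exact hκpos))
  have hm₁ : ‖(F 0) ^ (2^n₀)‖ < κ ^ (2^n₀) := hn₀ _ (Nat.lt_two_pow_self).le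
  -- Step 2 : small circle radius δ
  have hcont : Continuous fun w : ℂ => ‖(F w) ^ (2^n₀)‖ := (hF.continuous.pow _).norm
  obtain ⟨δ₀, hδ₀pos, hδ₀⟩ := Metric.eventually_nhds_iff.mp
    ((hcont.continuousAt (x := 0)).eventually_lt_const hm₁)
  set δ := min (δ₀/2) (1/2) with hδdef
  have hδpos : 0 < δ := by positivity
  have hδhalf : δ ≤ 1/2 := min_le_right _ _
  have hδlt1 : δ < 1 := lt_of_le_of_lt hδhalf (by norm_num)
  have hδsmall : ∀ w : ℂ, ‖w‖ = δ → ∀ j, n₀ ≤ j → ‖(F w)^(2^j)‖ ≤ κ^(2^j) := by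
    intro w hw j hj
    refine norm_pow_two_le (F w) n₀ hκpos.le ?_ j hj
    refine (hδ₀ ?_).le
    rw [dist_zero_right, hw]
    calc δ ≤ δ₀/2 := min_le_left _ _
      _ < δ₀ := by linarith
  -- logs
  set l := Real.log δ⁻¹ with hldef
  have hl2 : Real.log 2 ≤ l := by
    apply Real.log_le_log (by norm_num)
    rw [le_inv_comm₀ (by norm_num) hδpos]
    calc δ ≤ 1/2 := hδhalf
      _ = 2⁻¹ := by norm_num
  have hlpos : 0 < l := lt_of_lt_of_le (Real.log_pos (by norm_num)) hl2
  set X := Real.log (2*M'/ε) with hXdef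
  have hX2 : Real.log 2 ≤ X := by
    apply Real.log_le_log (by norm_num)
    rw [le_div_iff₀ hε]
    nlinarith
  have hXpos : 0 < X := lt_of_lt_of_le (Real.log_pos (by norm_num)) hX2
  set tb := Real.log 4 / (2*l) with htbdef
  have hlog4 : 0 < Real.log 4 := Real.log_pos (by norm_num)
  have htbpos : 0 < tb := by positivity
  set R := Real.exp ((X + Real.log ‖(1:A)‖ + 1)/tb) with hRdef
  have hexppos : 0 < (X + Real.log ‖(1:A)‖ + 1)/tb := by positivity
  have hR1 : 1 < R := by
    calc (1:ℝ) = Real.exp 0 := Real.exp_zero.symm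
      _ < R := Real.exp_lt_exp.mpr hexppos
  have hRpos : 0 < R := lt_trans one_pos hR1
  have hlogR : Real.log R = (X + Real.log ‖(1:A)‖ + 1)/tb := Real.log_exp _
  -- Step 4 : Dini on the circle of radius R
  have hdini : ∃ j₂, n₀ ≤ j₂ ∧ ∀ w : ℂ, ‖w‖ = R → ‖(F w)^(2^j₂)‖ ≤ (2*M')^(2^j₂) := by
    classical
    set c := (3/2)*M' with hcdef
    have hcpos : 0 < c := by positivity
    have hcM : c ≤ 2*M' := by nlinarith
    have cover : Metric.sphere (0:ℂ) R ⊆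
        ⋃ j : ℕ, {w : ℂ | ‖(F w)^(2^j)‖ < c^(2^j)} := by
      intro w _
      obtain ⟨n₁, hn₁⟩ := eventually_atTop.mp
        (eventually_pow_lt (y := F w) (c := c) (lt_of_le_of_lt (hM'b w) (by nlinarith)))
      exact Set.mem_iUnion.mpr ⟨n₁, hn₁ _ (Nat.lt_two_pow_self).le⟩
    obtain ⟨t, ht⟩ := (isCompact_sphere (0:ℂ) R).elim_finite_subcover
      (fun j : ℕ => {w : ℂ | ‖(F w)^(2^j)‖ < c^(2^j)})
      (fun j => isOpen_lt ((hF.continuous.pow _).norm) continuous_const) cover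
    refine ⟨max (t.sup id) n₀, le_max_right _ _, fun w hw => ?_⟩
    have hw' : w ∈ Metric.sphere (0:ℂ) R := by
      simpa [mem_sphere_zero_iff_norm] using hw
    obtain ⟨j, hjt, hj⟩ := Set.mem_iUnion₂.mp (ht hw')
    have hjle : j ≤ max (t.sup id) n₀ :=
      le_trans (Finset.le_sup (f := id) hjt) (le_max_left _ _)
    exact (norm_pow_two_le (F w) j hcpos.le hj.le _ hjle).trans
      (pow_le_pow_left₀ hcpos.le hcM _)
  obtain ⟨j₂, hj₂, hRbound⟩ := hdini
  set m := 2^j₂ with hmdef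
  have hm1 : 1 ≤ m := Nat.one_le_two_pow
  -- Step 5 : N and k
  set N₁ := Nat.ceil ((l + Real.log ‖(1:A)‖) * 2 / Real.log 4) with hN₁def
  set N := max N₁ 1 with hNdef
  have hN1 : 1 ≤ N := le_max_right _ _
  set k := Nat.floor (tb * (m*N : ℕ)) + 1 with hkdef
  have hmN1 : 1 ≤ m*N := Nat.one_le_iff_ne_zero.mpr (by positivity)
  have hmNR : (1:ℝ) ≤ (m*N : ℕ) := by exact_mod_cast hmN1
  have hk_lb : tb * (m*N : ℕ) ≤ (k:ℝ) := by
    push_cast [hkdef]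
    exact (Nat.lt_floor_add_one _).le
  have hk_ub : (k:ℝ) ≤ tb*(m*N : ℕ) + 1 := by
    have := Nat.floor_le (a := tb * (m*N : ℕ)) (by positivity)
    push_cast [hkdef]
    push_cast at this
    linarith
  -- inequality (i)
  have hineq1 : (k:ℝ) * l + Real.log ‖(1:A)‖ ≤ (m*N : ℕ) * Real.log 4 := by
    have hNge : ((l + Real.log ‖(1:A)‖) * 2 / Real.log 4) ≤ (N:ℝ) := by
      calc _ ≤ (N₁ : ℝ) := Nat.le_ceil _
        _ ≤ (N:ℝ) := by exact_mod_cast le_max_left _ _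
    have hmNge : ((l + Real.log ‖(1:A)‖) * 2 / Real.log 4) ≤ ((m*N:ℕ):ℝ) := by
      refine hNge.trans ?_
      have : (N:ℝ) ≤ ((m*N:ℕ):ℝ) := by
        push_cast
        nlinarith [hmNR, (by positivity : (0:ℝ) ≤ (N:ℝ)), (by exact_mod_cast hm1 : (1:ℝ) ≤ (m:ℝ))]
      linarith
    have h2 : l + Real.log ‖(1:A)‖ ≤ ((m*N:ℕ):ℝ) * Real.log 4 / 2 := by
      rw [div_le_iff₀ hlog4] at hmNge
      linarith
    have h3 : (k:ℝ) * l ≤ (tb*(m*N:ℕ) + 1) * l := by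
      apply mul_le_mul_of_nonneg_right hk_ub hlpos.le
    have h4 : (tb*(m*N:ℕ) + 1) * l = ((m*N:ℕ):ℝ) * Real.log 4 / 2 + l := by
      rw [htbdef]
      field_simp <;> ring
    nlinarith
  -- inequality (ii)
  have hineq2 : ((m*N : ℕ):ℝ) * X + Real.log ‖(1:A)‖ ≤ (k:ℝ) * Real.log R := by
    have hlogRpos : 0 < Real.log R := Real.log_pos hR1
    have h1 : tb * ((m*N:ℕ):ℝ) * Real.log R = ((m*N:ℕ):ℝ) * (X + Real.log ‖(1:A)‖ + 1) := by
      rw [hlogR]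
      field_simp
    have h2 : ((m*N:ℕ):ℝ) * (X + Real.log ‖(1:A)‖ + 1) ≥ ((m*N:ℕ):ℝ)*X + Real.log ‖(1:A)‖ := by
      nlinarith
    calc ((m*N : ℕ):ℝ) * X + Real.log ‖(1:A)‖ ≤ tb * ((m*N:ℕ):ℝ) * Real.log R := by
          rw [h1]; linarith
      _ ≤ (k:ℝ) * Real.log R := by
          apply mul_le_mul_of_nonneg_right hk_lb hlogRpos.le
  -- Step 6 : annulus maximum principle
  set mN := m*N with hmNdef
  set U : Set ℂ := Metric.ball (0:ℂ) R ∩ (Metric.closedBall (0:ℂ) δ)ᶜ with hUdef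
  have hUopen : IsOpen U := Metric.isOpen_ball.inter Metric.isClosed_closedBall.isOpen_compl
  have hUb : Bornology.IsBounded U := Metric.isBounded_ball.subset Set.inter_subset_left
  have hUsub : closure U ⊆ {w : ℂ | δ ≤ ‖w‖ ∧ ‖w‖ ≤ R} := by
    apply closure_minimal
    · rintro w ⟨hw1, hw2⟩
      rw [Metric.mem_ball, dist_zero_right] at hw1
      rw [Set.mem_compl_iff, Metric.mem_closedBall, dist_zero_right, not_le] at hw2
      exact ⟨hw2.le, hw1.le⟩
    · rw [Set.setOf_and]
      exact (isClosed_le continuous_const continuous_norm).inter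
        (isClosed_le continuous_norm continuous_const)
  have hne0 : ∀ w ∈ closure U, w ≠ 0 := by
    intro w hw h0w
    have h1 := (hUsub hw).1
    rw [h0w, norm_zero] at h1
    linarith
  set H : ℂ → A := fun w => (w^k)⁻¹ • (F w)^mN with hHdef
  have hHdiff : ∀ w : ℂ, w ≠ 0 → DifferentiableAt ℂ H w := by
    intro w hw
    exact ((differentiableAt_id.pow k).inv (pow_ne_zero _ hw)).smul
      ((hF w).pow mN)
  have hDCC : DiffContOnCl ℂ H U :=
    ⟨fun w hw => (hHdiff w (hne0 w (subset_closure hw))).differentiableWithinAt,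
     fun w hw => (hHdiff w (hne0 w hw)).continuousAt.continuousWithinAt⟩
  set C := max ((δ^k)⁻¹ * (κ^m)^N) ((R^k)⁻¹ * ((2*M')^m)^N) with hCdef
  have hHnorm : ∀ w : ℂ, ‖H w‖ = (‖w‖^k)⁻¹ * ‖(F w)^mN‖ := by
    intro w
    rw [hHdef]
    simp [norm_smul, norm_inv, norm_pow]
  have hpowN : ∀ (y : A), ‖y^mN‖ ≤ ‖y^m‖^N := by
    intro y
    rw [hmNdef, pow_mul]
    exact norm_pow_le' _ (by omega)
  have hfront : ∀ w ∈ frontier U, ‖H w‖ ≤ C := by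
    intro w hw
    have hwcl : w ∈ closure U := frontier_subset_closure hw
    have hwnotU : w ∉ U := by
      rw [hUopen.frontier_eq] at hw
      exact hw.2
    have h1 := (hUsub hwcl).1
    have h2 := (hUsub hwcl).2
    have hcase : ‖w‖ = δ ∨ ‖w‖ = R := by
      by_contra hcon
      push_neg at hcon
      apply hwnotU
      constructor
      · rw [Metric.mem_ball, dist_zero_right]
        exact lt_of_le_of_ne h2 hcon.2
      · rw [Set.mem_compl_iff, Metric.mem_closedBall, dist_zero_right, not_le]
        exact lt_of_le_of_ne h1 (Ne.symm hcon.1)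
    rcases hcase with hww | hww
    · calc ‖H w‖ = (‖w‖^k)⁻¹ * ‖(F w)^mN‖ := hHnorm w
        _ ≤ (δ^k)⁻¹ * (κ^m)^N := by
            rw [hww]
            apply mul_le_mul_of_nonneg_left ?_ (by positivity)
            refine (hpowN _).trans ?_
            exact pow_le_pow_left₀ (norm_nonneg _) (hδsmall w hww j₂ hj₂) N
        _ ≤ C := le_max_left _ _
    · calc ‖H w‖ = (‖w‖^k)⁻¹ * ‖(F w)^mN‖ := hHnorm w
        _ ≤ (R^k)⁻¹ * ((2*M')^m)^N := by
            rw [hww]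
            apply mul_le_mul_of_nonneg_left ?_ (by positivity)
            refine (hpowN _).trans ?_
            exact pow_le_pow_left₀ (norm_nonneg _) (hRbound w hww) N
        _ ≤ C := le_max_right _ _
  have honeU : (1:ℂ) ∈ U := by
    constructor
    · rw [Metric.mem_ball, dist_zero_right, norm_one]
      exact hR1
    · rw [Set.mem_compl_iff, Metric.mem_closedBall, dist_zero_right, norm_one, not_le]
      linarith
  have hmax := Complex.norm_le_of_forall_mem_frontier_norm_le hUb hDCC hfront
    (subset_closure honeU)
  have hH1 : ‖H 1‖ = ‖(F 1)^mN‖ := by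
    rw [hHdef]
    simp
  have hmNne : mN ≠ 0 := by positivity
  -- Step 7 : final arithmetic
  have hfinal : srad (F 1) ^ mN ≤ C * ‖(1:A)‖ := by
    calc srad (F 1) ^ mN ≤ ‖(F 1)^mN‖ * ‖(1:A)‖ := srad_pow_le _ hmNne
      _ ≤ C * ‖(1:A)‖ := by
          apply mul_le_mul_of_nonneg_right (hH1 ▸ hmax) (norm_nonneg _)
  have hnorm1pos : (0:ℝ) < ‖(1:A)‖ := lt_of_lt_of_le one_pos hone
  have hlδ : Real.log δ = -l := by
    rw [hldef, Real.log_inv]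
    ring
  have hC1 : (δ^k)⁻¹ * (κ^m)^N * ‖(1:A)‖ ≤ ε ^ mN := by
    have hLHSpos : 0 < (δ^k)⁻¹ * (κ^m)^N * ‖(1:A)‖ := by positivity
    have hRHSpos : 0 < ε ^ mN := by positivity
    rw [← Real.log_le_log_iff hLHSpos hRHSpos,
      Real.log_mul (by positivity) (by positivity),
      Real.log_mul (by positivity) (by positivity),
      Real.log_inv]
    simp only [Real.log_pow]
    have hlκ : Real.log κ = Real.log ε - Real.log 4 := by
      rw [hκdef, Real.log_div (ne_of_gt hε) (by norm_num)]
    rw [hlδ, hlκ]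
    have hmNcast : ((mN:ℕ):ℝ) = (m:ℝ)*(N:ℝ) := by rw [hmNdef]; push_cast; ring
    have h1' := hineq1
    rw [hmNcast] at h1' ⊢
    nlinarith [h1']
  have hlog2M' : Real.log (2*M') = X + Real.log ε := by
    rw [hXdef, Real.log_div (by positivity) (ne_of_gt hε)]
    ring
  have hC2 : (R^k)⁻¹ * ((2*M')^m)^N * ‖(1:A)‖ ≤ ε ^ mN := by
    have hLHSpos : 0 < (R^k)⁻¹ * ((2*M')^m)^N * ‖(1:A)‖ := by positivity
    have hRHSpos : 0 < ε ^ mN := by positivity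
    rw [← Real.log_le_log_iff hLHSpos hRHSpos,
      Real.log_mul (by positivity) (by positivity),
      Real.log_mul (by positivity) (by positivity),
      Real.log_inv]
    simp only [Real.log_pow]
    rw [hlog2M']
    have hmNcast : ((mN:ℕ):ℝ) = (m:ℝ)*(N:ℝ) := by rw [hmNdef]; push_cast; ring
    have h2' := hineq2
    rw [hmNcast] at h2' ⊢
    nlinarith [h2']
  have hCle : C * ‖(1:A)‖ ≤ ε ^ mN := by
    rw [hCdef, max_mul_of_nonneg _ _ (norm_nonneg (1:A))]
    exact max_le hC1 hC2
  exact le_of_pow_le_pow_left₀ hmNne hε.le (hfinal.trans hCle)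




end VesAux

lemma srad_le_norm (y : A) : srad y ≤ ‖y‖ * ‖(1:A)‖ := by
  simpa using srad_pow_le y (n := 1) one_ne_zero

lemma spectralRadius_eq_zero_iff (y : A) :
    spectralRadius ℂ y = 0 ↔ ∀ k ∈ spectrum ℂ y, k = 0 := by
  constructor
  · intro h k hk
    have : (‖k‖₊ : ℝ≥0∞) ≤ spectralRadius ℂ y := le_iSup₂ (f := fun k (_ : k ∈ spectrum ℂ y) => (‖k‖₊ : ℝ≥0∞)) k hk
    rw [h, le_zero_iff] at this
    simpa using this
  · intro h
    refine le_antisymm ?_ zero_le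
    refine iSup₂_le fun k hk => ?_
    simp [h k hk]

lemma spectralRadius_zero : spectralRadius ℂ (0 : A) = 0 := by
  rw [spectralRadius_eq_zero_iff]
  intro k hk
  rcases subsingleton_or_nontrivial A with hA | hA
  · have : IsUnit ((algebraMap ℂ A) k - 0) := isUnit_of_subsingleton _
    exact absurd this (spectrum.mem_iff.mp hk)
  · rw [spectrum.zero_eq] at hk
    simpa using hk

lemma srad_smul_zero {y : A} (hy : spectralRadius ℂ y = 0) (t : ℂ) :
    spectralRadius ℂ (t • y) = 0 := by
  rcases eq_or_ne t 0 with rfl | ht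
  · simpa using spectralRadius_zero (A := A)
  · rw [spectralRadius_eq_zero_iff]
    intro k hk
    rw [show t • y = (Units.mk0 t ht) • y from rfl, spectrum.unit_smul_eq_smul] at hk
    obtain ⟨k', hk', rfl⟩ := hk
    rw [(spectralRadius_eq_zero_iff y).mp hy k' hk']
    simp

lemma spectralRadius_units_conj (u : Aˣ) (y : A) :
    spectralRadius ℂ ((u : A) * y * ((u⁻¹ : Aˣ) : A)) = spectralRadius ℂ y := by
  unfold spectralRadius
  rw [spectrum.units_conjugate]

lemma vesentini [Nontrivial A] (F : ℂ → A) (hF : Differentiable ℂ F) (M : ℝ)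
    (hM : ∀ w, srad (F w) ≤ M) {z₀ : ℂ} (h0 : spectralRadius ℂ (F z₀) = 0) (z : ℂ) :
    spectralRadius ℂ (F z) = 0 := by
  have hG : Differentiable ℂ (fun w : ℂ => F (z₀ + w*(z-z₀))) :=
    hF.comp (by fun_prop)
  have := vesentini_aux (fun w => F (z₀ + w*(z-z₀))) hG M (fun w => hM _)
    (by simpa using h0)
  simpa using this

lemma quasinil_add (x : A)
    (h : ∀ (lam : ℂ) (q : A), spectralRadius ℂ q = 0 →
      spectralRadius ℂ (lam • x + q) ≤ (‖q‖₊ : ℝ≥0∞))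
    (lam : ℂ) (q : A) (hq : spectralRadius ℂ q = 0) :
    spectralRadius ℂ (lam • x + q) = 0 := by
  rcases subsingleton_or_nontrivial A with hA | hA
  · rw [Subsingleton.elim (lam • x + q) 0]
    exact spectralRadius_zero
  have hb : ∀ w : ℂ, srad (w • x + q) ≤ (‖q‖ : ℝ) := by
    intro w
    simpa using srad_le_of_le (h w q hq)
  have h0 : spectralRadius ℂ ((0:ℂ) • x + q) = 0 := by simpa using hq
  exact vesentini (fun w => w • x + q)
    ((differentiable_id.smul_const x).add_const q) ‖q‖ hb (z₀ := 0) h0 lam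

lemma commutator_quasinil [Nontrivial A] (x : A)
    (hSA : ∀ (lam : ℂ) (q : A), spectralRadius ℂ q = 0 →
      spectralRadius ℂ (lam • x + q) = 0)
    (c : A) : spectralRadius ℂ (c*x - x*c) = 0 := by
  letI : NormedAlgebra ℚ A := NormedAlgebra.restrictScalars ℚ ℂ A
  have hx : spectralRadius ℂ x = 0 := by
    simpa using hSA 1 0 spectralRadius_zero
  -- the conjugation family
  set f : ℂ → A := fun w => exp (w • c) * x * exp (-(w • c)) with hfdef
  have hkey : ∀ w : ℂ, exp (w • c) * exp (-(w • c)) = 1 := by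
    intro w
    rw [← exp_add_of_commute ((Commute.refl (w • c)).neg_right), add_neg_cancel, exp_zero]
  have hkey' : ∀ w : ℂ, exp (-(w • c)) * exp (w • c) = 1 := by
    intro w
    rw [← exp_add_of_commute ((Commute.refl (w • c)).neg_left), neg_add_cancel, exp_zero]
  set u : ℂ → Aˣ := fun w => ⟨exp (w • c), exp (-(w • c)), hkey w, hkey' w⟩ with hudef
  have hf0 : f 0 = x := by
    simp [hfdef, exp_zero]
  have hfd : Differentiable ℂ f := by
    have h1 : Differentiable ℂ (fun w : ℂ => exp (w • c)) :=
      fun w => (hasDerivAt_exp_smul_const c w).differentiableAt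
    have h2 : Differentiable ℂ (fun w : ℂ => exp (w • (-c))) :=
      fun w => (hasDerivAt_exp_smul_const (-c) w).differentiableAt
    have h2' : Differentiable ℂ (fun w : ℂ => exp (-(w • c))) := by
      simpa [smul_neg] using h2
    exact (h1.mul_const x).mul h2'
  -- values of the difference quotient are quasinilpotent away from 0
  have hg0 : ∀ w : ℂ, w ≠ 0 → spectralRadius ℂ (dslope f 0 w) = 0 := by
    intro w hw
    rw [dslope_of_ne f hw, slope_def_module]
    apply srad_smul_zero
    rw [hf0]
    -- f w - x = u * (x + (-(u⁻¹ * x * u))) * u⁻¹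
    have hq : spectralRadius ℂ (-(((u w)⁻¹ : Aˣ) * x * (u w : A))) = 0 := by
      have : (-(((u w)⁻¹ : Aˣ) * x * (u w : A))) = ((u w)⁻¹ : Aˣ) * (-x) * ((u w)⁻¹⁻¹ : Aˣ) := by
        simp [mul_assoc]
      rw [this, spectralRadius_units_conj]
      simpa using hSA (-1) 0 spectralRadius_zero
    have hxq : spectralRadius ℂ (x + (-(((u w)⁻¹ : Aˣ) * x * (u w : A)))) = 0 := by
      simpa using hSA 1 _ hq
    have hident : f w - x = (u w : A) * (x + (-(((u w)⁻¹ : Aˣ) * x * (u w : A)))) * (((u w)⁻¹ : Aˣ) : A) := by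
      have h1 : (u w : A) * x * (((u w)⁻¹: Aˣ) : A) = f w := rfl
      have h2 : (u w : A) * (((u w)⁻¹ : Aˣ) * x * (u w : A)) * (((u w)⁻¹: Aˣ) : A) = x := by
        have e1 : (u w : A) * (((u w)⁻¹ : Aˣ) : A) = 1 := u w |>.mul_inv
        rw [mul_assoc (((u w)⁻¹ : Aˣ) : A) x (u w : A), Units.mul_inv_cancel_left]
        exact Units.mul_inv_cancel_right x (u w)
      rw [mul_add, add_mul, h1, mul_neg, neg_mul, h2, sub_eq_add_neg]
    rw [hident, spectralRadius_units_conj]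
    exact hxq
  have hgd : Differentiable ℂ (dslope f 0) := by
    intro w
    rcases eq_or_ne w 0 with rfl | hw
    · obtain ⟨p, hp⟩ := (hfd.analyticAt 0)
      exact (hp.has_fpower_series_dslope_fslope).differentiableAt
    · exact (differentiableAt_dslope_of_ne hw).mpr (hfd w)
  have hM : ∀ w, srad (dslope f 0 w) ≤ ‖dslope f 0 0‖ * ‖(1:A)‖ := by
    intro w
    rcases eq_or_ne w 0 with rfl | hw
    · exact srad_le_norm _
    · rw [srad_of_eq_zero (hg0 w hw)]
      positivity
  have hconc := vesentini (dslope f 0) hgd _ hM (z₀ := 1) (hg0 1 one_ne_zero) 0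
  -- compute dslope f 0 0 = deriv f 0 = c*x - x*c
  have hd : HasDerivAt f (c*x - x*c) 0 := by
    have h1 : HasDerivAt (fun w : ℂ => exp (w • c)) c 0 := by
      simpa using hasDerivAt_exp_smul_const' c (0:ℂ)
    have h2 : HasDerivAt (fun w : ℂ => exp (-(w • c))) (-c) 0 := by
      have := hasDerivAt_exp_smul_const' (-c) (0:ℂ)
      simp only [smul_neg] at this ⊢
      simpa using this
    have h3 : HasDerivAt f _ 0 := (h1.mul_const x).mul h2
    simpa [exp_zero, sub_eq_add_neg] using h3
  rw [dslope_same, hd.deriv] at hconc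
  exact hconc



theorem partB (x : A)
    (hSA : ∀ (lam : ℂ) (q : A), spectralRadius ℂ q = 0 →
      spectralRadius ℂ (lam • x + q) = 0)
    (hJ : Ideal.jacobson (⊥ : Ideal A) = ⊥) : x = 0 := by
  rcases subsingleton_or_nontrivial A with hA | hA
  · exact Subsingleton.elim x 0
  have hx : spectralRadius ℂ x = 0 := by simpa using hSA 1 0 spectralRadius_zero
  have hmem : ∀ L : Ideal A, L.IsMaximal → x ∈ L := by
    intro L hL
    by_contra hxL
    have hLne : L ≠ ⊤ := hL.ne_top
    have hunit : ∀ y ∈ L, ¬ IsUnit y := fun y hy hu =>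
      hLne (Ideal.eq_top_of_isUnit_mem L hy hu)
    have hq_unit : ∀ y : A, spectralRadius ℂ y = 0 → IsUnit (1 - y) := by
      intro y hy
      have h1 : (1:ℂ) ∉ spectrum ℂ y := fun hmem =>
        one_ne_zero ((spectralRadius_eq_zero_iff y).mp hy 1 hmem)
      have := spectrum.notMem_iff.mp h1
      simpa using this
    -- dichotomy for K = L + L·x
    set K : Ideal A := L ⊔ Submodule.map (LinearMap.toSpanSingleton A A x) L with hKdef
    have hLK : L ≤ K := le_sup_left
    rcases eq_or_lt_of_le hLK with hKL | hKlt
    swap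
    · -- case K = ⊤ : there is a ∈ L with 1 - a*x ∈ L
      have hKtop : K = ⊤ := hL.out.2 K hKlt
      have h1K : (1:A) ∈ K := hKtop ▸ Submodule.mem_top
      rw [hKdef] at h1K
      obtain ⟨l, hlL, z, hz, hlz⟩ := Submodule.mem_sup.mp h1K
      obtain ⟨a, haL, rfl⟩ := hz
      have hax : (1:A) - a * x ∈ L := by
        have : (1:A) - a * x = l := by
          rw [← hlz, LinearMap.toSpanSingleton_apply, smul_eq_mul]
          abel
        rw [this]
        exact hlL
      have hy := commutator_quasinil x hSA a
      have hmemL : (1:A) - (a*x - x*a) ∈ L := by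
        have hxa : x * a ∈ L := by
          have := L.smul_mem x haL
          simpa [smul_eq_mul] using this
        have hrw : (1:A) - (a*x - x*a) = ((1:A) - a*x) + x*a := by abel
        rw [hrw]
        exact L.add_mem hax hxa
      exact hunit _ hmemL (hq_unit _ hy)
    · -- case K = L : L·x ⊆ L, use the quotient module
      have hLx : ∀ a ∈ L, a * x ∈ L := by
        intro a ha
        have h1 : (a • x) ∈ K := by
          apply Submodule.mem_sup_right
          exact Submodule.mem_map_of_mem ha
        rw [← hKL] at h1
        simpa [smul_eq_mul] using h1
      -- L is closed
      haveI hCCS : ContinuousConstSMul A A := ⟨fun r => continuous_const.mul continuous_id⟩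
      have hLclosed : IsClosed (L : Set A) := by
        have hcl : L.topologicalClosure = L ∨ L.topologicalClosure = ⊤ := by
          rcases eq_or_lt_of_le L.le_topologicalClosure with h | h
          · exact Or.inl h.symm
          · exact Or.inr (hL.out.2 _ h)
        rcases hcl with h | h
        · rw [← h]
          exact L.isClosed_topologicalClosure
        · exfalso
          have h1 : (1:A) ∈ closure (L : Set A) := by
            rw [← Submodule.topologicalClosure_coe, h]
            trivial
          obtain ⟨y, hy1, hy2⟩ := mem_closure_iff_nhds.mp h1 {y : A | IsUnit y}
            (Units.isOpen.mem_nhds isUnit_one)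
          exact hunit y hy2 hy1
      haveI : IsClosed (L : Set A) := hLclosed
      haveI : Nontrivial (A ⧸ L) := by
        refine ⟨Submodule.Quotient.mk 1, 0, fun h => hLne ?_⟩
        rw [Submodule.Quotient.mk_eq_zero] at h
        exact (Ideal.eq_top_iff_one L).mpr h
      -- the operator
      have hLle : L ≤ Submodule.comap (LinearMap.toSpanSingleton A A x) L := by
        intro a ha
        rw [Submodule.mem_comap, LinearMap.toSpanSingleton_apply, smul_eq_mul]
        exact hLx a ha
      set φ₀ : A ⧸ L →ₗ[A] A ⧸ L := Submodule.mapQ L L (LinearMap.toSpanSingleton A A x) hLle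
        with hφ₀def
      set φℂ : A ⧸ L →ₗ[ℂ] A ⧸ L := φ₀.restrictScalars ℂ with hφℂdef
      have hφmk : ∀ y : A, φℂ (Submodule.Quotient.mk y) = Submodule.Quotient.mk (y * x) := by
        intro y
        rw [hφℂdef, LinearMap.coe_restrictScalars, hφ₀def, Submodule.mapQ_apply,
          LinearMap.toSpanSingleton_apply, smul_eq_mul]
      have hφbound : ∀ ξ : A ⧸ L, ‖φℂ ξ‖ ≤ ‖x‖ * ‖ξ‖ := by
        intro ξ
        refine le_of_forall_pos_le_add (fun ε hε => ?_)
        have hεx : 0 < ε / (‖x‖ + 1) := by positivity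
        obtain ⟨y, rfl, hylt⟩ := Submodule.Quotient.norm_mk_lt ξ hεx
        calc ‖φℂ (Submodule.Quotient.mk y)‖ = ‖(Submodule.Quotient.mk (y * x) : A ⧸ L)‖ := by
              rw [hφmk]
          _ ≤ ‖y * x‖ := Submodule.Quotient.norm_mk_le _ _
          _ ≤ ‖y‖ * ‖x‖ := norm_mul_le _ _
          _ ≤ (‖(Submodule.Quotient.mk y : A ⧸ L)‖ + ε/(‖x‖+1)) * ‖x‖ := by
              apply mul_le_mul_of_nonneg_right hylt.le (norm_nonneg _)
          _ ≤ ‖x‖ * ‖(Submodule.Quotient.mk y : A ⧸ L)‖ + ε := by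
              have hx1 : ‖x‖ / (‖x‖ + 1) ≤ 1 := by
                rw [div_le_one (by positivity)]
                linarith
              have : ε/(‖x‖+1) * ‖x‖ ≤ ε := by
                rw [div_mul_eq_mul_div, mul_comm, ← div_mul_eq_mul_div]
                calc ‖x‖/(‖x‖+1) * ε ≤ 1 * ε := by
                      apply mul_le_mul_of_nonneg_right hx1 hε.le
                  _ = ε := one_mul ε
              nlinarith [norm_nonneg x, norm_nonneg (Submodule.Quotient.mk y : A ⧸ L)]
      set φ : (A ⧸ L) →L[ℂ] (A ⧸ L) := LinearMap.mkContinuous φℂ ‖x‖ hφbound with hφdef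
      haveI : Nontrivial ((A ⧸ L) →L[ℂ] (A ⧸ L)) := by
        refine ⟨1, 0, fun h => ?_⟩
        have h1 : (1 : (A ⧸ L) →L[ℂ] (A ⧸ L)) (Submodule.Quotient.mk 1) = 0 := by
          rw [h]; rfl
        rw [ContinuousLinearMap.one_apply] at h1
        rw [Submodule.Quotient.mk_eq_zero] at h1
        exact hLne ((Ideal.eq_top_iff_one L).mpr h1)
      obtain ⟨cc, hcc⟩ := spectrum.nonempty φ
      set ψ : (A ⧸ L) →L[ℂ] (A ⧸ L) := algebraMap ℂ _ cc - φ with hψdef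
      have hψmk : ∀ y : A, ψ (Submodule.Quotient.mk y)
          = Submodule.Quotient.mk (cc • y - y * x) := by
        intro y
        rw [hψdef, ContinuousLinearMap.sub_apply, hφdef, LinearMap.mkContinuous_apply, hφmk,
          Algebra.algebraMap_eq_smul_one, ContinuousLinearMap.smul_apply,
          ContinuousLinearMap.one_apply, ← Submodule.Quotient.mk_smul, ← Submodule.Quotient.mk_sub]
      -- ideal Kc
      set Kc : Ideal A :=
        { carrier := {y : A | cc • y - y * x ∈ L}
          add_mem' := by
            intro a b ha hb
            have h : cc • (a + b) - (a + b) * x = (cc • a - a * x) + (cc • b - b * x) := by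
              rw [smul_add, add_mul]; abel
            show cc • (a + b) - (a + b) * x ∈ L
            rw [h]
            exact L.add_mem ha hb
          zero_mem' := by simp
          smul_mem' := by
            intro r y hy
            have h : cc • (r * y) - (r * y) * x = r * (cc • y - y * x) := by
              rw [mul_sub, mul_smul_comm, ← mul_assoc]
            show cc • (r • y) - (r • y) * x ∈ L
            rw [smul_eq_mul, h]
            exact L.smul_mem r hy } with hKcdef
      have hccsmul : ∀ y : A, cc • y = (cc • (1:A)) * y := by
        intro y
        rw [smul_mul_assoc, one_mul]
      have hLKc : L ≤ Kc := by
        intro y hy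
        show cc • y - y * x ∈ L
        refine L.sub_mem ?_ (hLx y hy)
        rw [hccsmul]
        exact L.smul_mem _ hy
      have h1Kc : ((1:A) ∈ Kc) ↔ cc • (1:A) - x ∈ L := by
        constructor
        · intro h
          have h' : cc • (1:A) - 1 * x ∈ L := h
          simpa using h'
        · intro h
          show cc • (1:A) - 1 * x ∈ L
          simpa using h
      rcases eq_or_lt_of_le hLKc with hKcL | hKclt
      swap
      · -- Kc = ⊤ : cc•1 - x ∈ L
        have hKctop : Kc = ⊤ := hL.out.2 _ hKclt
        have h1 : cc • (1:A) - x ∈ L := h1Kc.mp (hKctop ▸ Submodule.mem_top)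
        rcases eq_or_ne cc 0 with rfl | hcc0
        · rw [zero_smul, zero_sub] at h1
          exact hxL (by simpa using L.neg_mem h1)
        · have hcu : IsUnit (cc • (1:A) - x) := by
            have hns : cc ∉ spectrum ℂ x := fun hmem =>
              hcc0 ((spectralRadius_eq_zero_iff x).mp hx cc hmem)
            have := spectrum.notMem_iff.mp hns
            rwa [Algebra.algebraMap_eq_smul_one] at this
          exact hunit _ h1 hcu
      · -- Kc = L
        -- ideal Rc
        set Rc : Ideal A :=
          { carrier := {y : A | ∃ z : A, cc • z - z * x - y ∈ L}
            add_mem' := by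
              rintro a b ⟨za, hza⟩ ⟨zb, hzb⟩
              refine ⟨za + zb, ?_⟩
              have h : cc • (za + zb) - (za + zb) * x - (a + b)
                  = (cc • za - za * x - a) + (cc • zb - zb * x - b) := by
                rw [smul_add, add_mul]; abel
              rw [h]
              exact L.add_mem hza hzb
            zero_mem' := ⟨0, by simp⟩
            smul_mem' := by
              rintro r y ⟨z, hz⟩
              refine ⟨r * z, ?_⟩
              have h : cc • (r * z) - (r * z) * x - r * y = r * (cc • z - z * x - y) := by
                rw [mul_sub, mul_sub, mul_smul_comm, ← mul_assoc]
              show cc • (r * z) - (r * z) * x - r • y ∈ L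
              rw [smul_eq_mul, h]
              exact L.smul_mem r hz } with hRcdef
        have hLRc : L ≤ Rc := by
          intro y hy
          exact ⟨0, by simpa using L.neg_mem hy⟩
        rcases eq_or_lt_of_le hLRc with hRcL | hRclt
        · -- Rc = L : direct contradiction
          have hy : cc • (1:A) - 1 * x ∈ Rc := ⟨1, by simp⟩
          rw [← hRcL] at hy
          have h1 : (1:A) ∈ Kc := hy
          rw [← hKcL] at h1
          exact hLne ((Ideal.eq_top_iff_one L).mpr h1)
        · -- Rc = ⊤ : ψ is bijective, contradicting cc ∈ spectrum φ
          have hRctop : Rc = ⊤ := hL.out.2 _ hRclt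
          have hker : ψ.ker = ⊥ := by
            rw [LinearMap.ker_eq_bot']
            intro ξ hξ
            obtain ⟨y, rfl⟩ := Submodule.Quotient.mk_surjective L ξ
            rw [ContinuousLinearMap.coe_coe, hψmk] at hξ
            rw [Submodule.Quotient.mk_eq_zero] at hξ
            have : y ∈ Kc := hξ
            rw [← hKcL] at this
            rwa [Submodule.Quotient.mk_eq_zero]
          have hrange : ψ.range = ⊤ := by
            rw [LinearMap.range_eq_top]
            intro ξ
            obtain ⟨y, rfl⟩ := Submodule.Quotient.mk_surjective L ξ
            have hy : y ∈ Rc := hRctop ▸ Submodule.mem_top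
            obtain ⟨z, hz⟩ := hy
            refine ⟨Submodule.Quotient.mk z, ?_⟩
            rw [ContinuousLinearMap.coe_coe, hψmk]
            rw [Submodule.Quotient.eq]
            exact hz
          have hIsUnit : IsUnit ψ := by
            refine ⟨⟨ψ, ((ContinuousLinearEquiv.ofBijective ψ hker hrange).symm :
              (A ⧸ L) →L[ℂ] (A ⧸ L)), ?_, ?_⟩, rfl⟩
            · ext ξ
              rw [ContinuousLinearMap.mul_apply, ContinuousLinearMap.one_apply]
              exact ContinuousLinearEquiv.ofBijective_apply_symm_apply ψ hker hrange ξ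
            · ext ξ
              rw [ContinuousLinearMap.mul_apply, ContinuousLinearMap.one_apply]
              exact ContinuousLinearEquiv.ofBijective_symm_apply_apply ψ hker hrange ξ
          rw [spectrum.mem_iff] at hcc
          exact hcc hIsUnit
  -- conclude
  have hxj : x ∈ Ideal.jacobson (⊥ : Ideal A) := by
    rw [Ideal.jacobson]
    rw [Submodule.mem_sInf]
    rintro J ⟨-, hJm⟩
    exact hmem J hJm
  rw [hJ] at hxj
  simpa using hxj



end Main

end QNPerturb

theorem quasinilpotent_perturbation {A : Type*} [NormedRing A] [NormedAlgebra ℂ A]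
    [CompleteSpace A] (a b : A)
    (h : ∀ (lam : ℂ) (q : A), spectralRadius ℂ q = 0 →
      spectralRadius ℂ (lam • (b - a) + q) ≤ (‖q‖₊ : ℝ≥0∞)) :
    (∀ q : A, spectralRadius ℂ q = 0 → spectralRadius ℂ ((b - a) + q) = 0) ∧
      (Ideal.jacobson (⊥ : Ideal A) = ⊥ → a = b) := by
  have hSA : ∀ (lam : ℂ) (q : A), spectralRadius ℂ q = 0 →
      spectralRadius ℂ (lam • (b - a) + q) = 0 :=
    fun lam q hq => QNPerturb.quasinil_add (b - a) h lam q hq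
  constructor
  · intro q hq
    simpa using hSA 1 q hq
  · intro hJ
    have hx : b - a = 0 := QNPerturb.partB (b - a) hSA hJ
    exact (sub_eq_zero.mp hx).symm
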